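/- Every connected Feynman graph with no inner edges is isomorphic either to the stick graph (the Feynman graph with two edges swapped by τ, no half-edges and no vertices) or to a corolla C_X for some finite set X. -/

import Mathlib

/-- A Feynman graph: finite sets of edges `E`, half-edges `H`, vertices `V`,
with an injective attachment `s : H → E`, a target map `t : H → V`, and a
fixed-point-free involution `inv : E → E`. -/
structure FG where
  E : Type
  H : Type
  V : Type
  finE : Finite E
  finH : Finite H
  finV : Finite V
  s : H → E
  t : H → V
  inv : E → E
  s_inj : Function.Injective s
  inv_inv : ∀ e, inv (inv e) = e
  inv_ne : ∀ e, inv e ≠ e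

attribute [instance] FG.finE FG.finH FG.finV

/-- A morphism of Feynman graphs. -/
structure FGHom (G G' : FG) where
  fE : G.E → G'.E
  fH : G.H → G'.H
  fV : G.V → G'.V
  comm_inv : ∀ e, fE (G.inv e) = G'.inv (fE e)
  comm_s : ∀ h, fE (G.s h) = G'.s (fH h)
  comm_t : ∀ h, fV (G.t h) = G'.t (fH h)

/-- Composition of morphisms of Feynman graphs. -/
def FGHom.comp {G₁ G₂ G₃ : FG} (g : FGHom G₂ G₃) (f : FGHom G₁ G₂) : FGHom G₁ G₃ where
  fE := g.fE ∘ f.fE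
  fH := g.fH ∘ f.fH
  fV := g.fV ∘ f.fV
  comm_inv := fun e => by simp only [Function.comp_apply, f.comm_inv, g.comm_inv]
  comm_s := fun h => by simp only [Function.comp_apply, f.comm_s, g.comm_s]
  comm_t := fun h => by simp only [Function.comp_apply, f.comm_t, g.comm_t]

/-- A morphism is an isomorphism if all three components are bijections. -/
def FGHom.IsIso {G G' : FG} (f : FGHom G G') : Prop :=
  Function.Bijective f.fE ∧ Function.Bijective f.fH ∧ Function.Bijective f.fV

/-- A morphism is locally injective if it is injective on each fibre `t⁻¹(v)`. -/
def FGHom.LocInj {G G' : FG} (f : FGHom G G') : Prop :=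
  ∀ h₁ h₂ : G.H, G.t h₁ = G.t h₂ → f.fH h₁ = f.fH h₂ → h₁ = h₂

/-- A morphism is étale if it induces a bijection `t⁻¹(v) → t'⁻¹(f_V v)`
for every vertex `v`. -/
def FGHom.Etale {G G' : FG} (f : FGHom G G') : Prop :=
  f.LocInj ∧
  ∀ (v : G.V) (h' : G'.H), G'.t h' = f.fV v → ∃ h : G.H, G.t h = v ∧ f.fH h = h'

/-- A port is an edge not in the image of `s`. -/
def FG.IsPort (G : FG) (e : G.E) : Prop := e ∉ Set.range G.s

/-- An inner edge: both `e` and `inv e` are in the image of `s`. -/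
def FG.IsInner (G : FG) (e : G.E) : Prop :=
  e ∈ Set.range G.s ∧ G.inv e ∈ Set.range G.s

/-- Connectedness: `E ⊔ V` is nonempty and every compatible `Bool`-colouring
of edges and vertices is constant. -/
def FG.Connected (G : FG) : Prop :=
  Nonempty (G.E ⊕ G.V) ∧
  ∀ (cE : G.E → Bool) (cV : G.V → Bool),
    (∀ e, cE (G.inv e) = cE e) →
    (∀ h, cV (G.t h) = cE (G.s h)) →
    ∀ x y : G.E ⊕ G.V, Sum.elim cE cV x = Sum.elim cE cV y

/-- The line graph `L^k` (for `k ≥ 0`): edges `l_0, …, l_{2k+1}` (here the pair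
`{l_{2j}, l_{2j+1}}` is encoded as `(j, false)` and `(j, true)`), `k` vertices,
and `2k` half-edges attaching `l_{2i-1}` and `l_{2i}` to the vertex `v_i`. -/
def lineGraph (k : ℕ) : FG where
  E := Fin (k+1) × Bool
  H := Fin k × Bool
  V := Fin k
  finE := inferInstance
  finH := inferInstance
  finV := inferInstance
  s := fun p => if p.2 then (p.1.castSucc, true) else (p.1.succ, false)
  t := fun p => p.1
  inv := fun p => (p.1, !p.2)
  s_inj := by
    rintro ⟨i, bi⟩ ⟨j, bj⟩ hij
    cases bi <;> cases bj <;> simp_all [Fin.succ_inj, Fin.castSucc_inj]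
  inv_inv := by rintro ⟨i, b⟩; simp
  inv_ne := by
    rintro ⟨i, b⟩ h
    rw [Prod.mk.injEq] at h
    exact (Bool.not_ne_self b) h.2

/-- The wheel graph `W^{m+1}` (this definition, with parameter `m : ℕ`, yields
exactly the wheel graphs `W^m` for `m ≥ 1`): `m+1` vertices in `Fin (m+1)`,
the vertex `i` carrying the two edges `(i, false)` and `(i, true)` (which are
also the half-edges, via `s = id`), and the involution pairing `(i, true)`
with `(i+1, false)` cyclically. -/
def wheelGraph (m : ℕ) : FG where
  E := Fin (m+1) × Bool
  H := Fin (m+1) × Bool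
  V := Fin (m+1)
  finE := inferInstance
  finH := inferInstance
  finV := inferInstance
  s := id
  t := fun p => p.1
  inv := fun p => if p.2 then (p.1 + 1, false) else (p.1 - 1, true)
  s_inj := fun _ _ h => h
  inv_inv := by
    rintro ⟨i, b⟩
    cases b <;> simp
  inv_ne := by
    rintro ⟨i, b⟩ h
    cases b <;> simp_all
/-- A connected graph is simply connected if it admits no locally injective
cycle (a cycle being a morphism from some wheel graph). -/
def FG.SimplyConnected (G : FG) : Prop :=
  G.Connected ∧ ∀ (m : ℕ) (c : FGHom (wheelGraph m) G), ¬ c.LocInj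

/-- The stick graph: two edges swapped by the involution, no half-edges, no
vertices. -/
def stickGraph : FG where
  E := Bool
  H := Empty
  V := Empty
  finE := inferInstance
  finH := inferInstance
  finV := inferInstance
  s := Empty.elim
  t := Empty.elim
  inv := fun b => !b
  s_inj := by intro a; exact a.elim
  inv_inv := Bool.not_not
  inv_ne := Bool.not_ne_self

/-- The corolla `C_X` on a finite set `X`: edges `X ⊔ X†` (with `inl x = x`,
`inr x = x†`, swapped by the involution), half-edges `X†` attached via the
inclusion, and a single vertex. -/
def corolla (X : Type) [Finite X] : FG where
  E := X ⊕ X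
  H := X
  V := Unit
  finE := inferInstance
  finH := inferInstance
  finV := inferInstance
  s := Sum.inr
  t := fun _ => ()
  inv := Sum.elim Sum.inr Sum.inl
  s_inj := fun _ _ h => by simpa using h
  inv_inv := by rintro (x | x) <;> rfl
  inv_ne := by rintro (x | x) h <;> simp at h

/-- Every connected Feynman graph with no inner edges is isomorphic either to
the stick graph or to a corolla `C_X` on some finite set `X`. -/
theorem connected_no_inner_edges_classification (G : FG) (hconn : G.Connected)
    (hnoinner : ∀ e : G.E, ¬ G.IsInner e) :
    (∃ f : FGHom G stickGraph, f.IsIso) ∨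
    (∃ (X : Type) (hX : Finite X) (f : FGHom G (@corolla X hX)), f.IsIso) := by
  classical
  by_cases hV : Nonempty G.V
  · -- corolla case
    right
    obtain ⟨v₀⟩ := hV
    -- every vertex equals v₀
    have hVone : ∀ v : G.V, v = v₀ := by
      intro v
      have key := hconn.2
        (fun e => decide (∃ h, (G.s h = e ∨ G.s h = G.inv e) ∧ G.t h = v₀))
        (fun w => decide (w = v₀)) ?_ ?_ (Sum.inr v) (Sum.inr v₀)
      · simpa using key
      · intro e
        simp only [decide_eq_decide]
        constructor
        · rintro ⟨h, hs | hs, ht⟩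
          · exact ⟨h, Or.inr (by rw [hs]), ht⟩
          · exact ⟨h, Or.inl (by rw [hs, G.inv_inv]), ht⟩
        · rintro ⟨h, hs | hs, ht⟩
          · exact ⟨h, Or.inr (by rw [hs, G.inv_inv]), ht⟩
          · exact ⟨h, Or.inl (by rw [hs]), ht⟩
      · intro h
        simp only [decide_eq_decide]
        constructor
        · intro ht; exact ⟨h, Or.inl rfl, ht⟩
        · rintro ⟨h', hs | hs, ht⟩
          · rw [G.s_inj hs] at ht; exact ht
          · exact absurd ⟨⟨h, rfl⟩, ⟨h', hs⟩⟩ (hnoinner (G.s h))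
    -- every edge is s h or inv (s h)
    have hE : ∀ e : G.E, (∃ h, e = G.s h) ∨ (∃ h, e = G.inv (G.s h)) := by
      intro e
      by_contra hc
      push_neg at hc
      have key := hconn.2
        (fun e' => decide ((∃ h, e' = G.s h) ∨ (∃ h, e' = G.inv (G.s h))))
        (fun _ => true) ?_ ?_ (Sum.inl e) (Sum.inr v₀)
      · simp only [Sum.elim_inl, Sum.elim_inr, decide_eq_true_eq] at key
        rcases key with ⟨h, he⟩ | ⟨h, he⟩
        · exact hc.1 h he
        · exact hc.2 h he
      · intro e'
        simp only [decide_eq_decide]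
        constructor
        · rintro (⟨h, he⟩ | ⟨h, he⟩)
          · exact Or.inr ⟨h, by rw [← he, G.inv_inv]⟩
          · refine Or.inl ⟨h, ?_⟩
            have := congrArg G.inv he
            rwa [G.inv_inv, G.inv_inv] at this
        · rintro (⟨h, he⟩ | ⟨h, he⟩)
          · exact Or.inr ⟨h, by rw [he]⟩
          · exact Or.inl ⟨h, by rw [he, G.inv_inv]⟩
      · intro h
        show true = decide _
        symm
        simp only [decide_eq_true_eq]
        exact Or.inl ⟨h, rfl⟩
    -- define the edge map
    set fE : G.E → G.H ⊕ G.H := fun e =>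
      if hx : ∃ h, G.s h = e then Sum.inr hx.choose
      else Sum.inl (((hE e).resolve_left (fun ⟨h, he⟩ => hx ⟨h, he.symm⟩)).choose) with hfE
    have key1 : ∀ h : G.H, fE (G.s h) = Sum.inr h := by
      intro h
      have hx : ∃ h', G.s h' = G.s h := ⟨h, rfl⟩
      rw [hfE]
      simp only [dif_pos hx]
      exact congrArg Sum.inr (G.s_inj hx.choose_spec)
    have key2 : ∀ h : G.H, fE (G.inv (G.s h)) = Sum.inl h := by
      intro h
      have hx : ¬ ∃ h', G.s h' = G.inv (G.s h) := by
        rintro ⟨h', hs⟩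
        exact hnoinner (G.s h) ⟨⟨h, rfl⟩, ⟨h', hs⟩⟩
      rw [hfE]
      simp only [dif_neg hx]
      refine congrArg Sum.inl (G.s_inj ?_)
      have hsp := (((hE (G.inv (G.s h))).resolve_left
        (fun ⟨h'', he⟩ => hx ⟨h'', he.symm⟩)).choose_spec)
      have := congrArg G.inv hsp
      rw [G.inv_inv, G.inv_inv] at this
      exact this.symm
    refine ⟨G.H, inferInstance,
      { fE := fE
        fH := id
        fV := fun _ => ()
        comm_inv := ?_
        comm_s := fun h => key1 h
        comm_t := fun _ => rfl }, ?_, ?_, ?_⟩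
    · intro e
      rcases hE e with ⟨h, rfl⟩ | ⟨h, rfl⟩
      · rw [key2 h, key1 h]; rfl
      · rw [G.inv_inv, key1 h, key2 h]; rfl
    · constructor
      · intro e₁ e₂ heq
        rcases hE e₁ with ⟨h₁, rfl⟩ | ⟨h₁, rfl⟩ <;>
          rcases hE e₂ with ⟨h₂, rfl⟩ | ⟨h₂, rfl⟩ <;>
          simp only [key1, key2] at heq <;>
          first
            | (injection heq with heq; rw [heq])
            | exact absurd heq (by simp)
      · rintro (h | h)
        · exact ⟨G.inv (G.s h), key2 h⟩
        · exact ⟨G.s h, key1 h⟩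
    · exact Function.bijective_id
    · constructor
      · intro v₁ v₂ _; rw [hVone v₁, hVone v₂]
      · intro _; exact ⟨v₀, rfl⟩
  · -- stick case
    left
    have hVempty : G.V → False := fun v => hV ⟨v⟩
    have hHempty : G.H → False := fun h => hVempty (G.t h)
    have hEne : Nonempty G.E := by
      rcases hconn.1 with ⟨e | v⟩
      · exact ⟨e⟩
      · exact (hVempty v).elim
    obtain ⟨e₀⟩ := hEne
    have hall : ∀ e : G.E, e = e₀ ∨ e = G.inv e₀ := by
      intro e
      have key := hconn.2
        (fun e' => decide (e' = e₀ ∨ e' = G.inv e₀))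
        (fun v => (hVempty v).elim) ?_ ?_ (Sum.inl e) (Sum.inl e₀)
      · simpa using key
      · intro e'
        simp only [decide_eq_decide]
        constructor
        · rintro (he | he)
          · exact Or.inr (by have := congrArg G.inv he; rwa [G.inv_inv] at this)
          · exact Or.inl (by
              have := congrArg G.inv he; rwa [G.inv_inv, G.inv_inv] at this)
        · rintro (he | he)
          · exact Or.inr (by rw [he])
          · exact Or.inl (by rw [he, G.inv_inv])
      · intro h; exact (hHempty h).elim
    have hne : e₀ ≠ G.inv e₀ := fun h => G.inv_ne e₀ h.symm
    refine ⟨{ fE := fun e => decide (e = G.inv e₀)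
              fH := fun h => (hHempty h).elim
              fV := fun v => (hVempty v).elim
              comm_inv := ?_
              comm_s := fun h => (hHempty h).elim
              comm_t := fun h => (hHempty h).elim }, ?_, ?_, ?_⟩
    · intro e
      rcases hall e with rfl | rfl
      · show decide _ = !(decide _)
        simp [hne]
      · show decide _ = !(decide _)
        simp [G.inv_inv, hne]
    · constructor
      · intro e₁ e₂ heq
        replace heq : decide (e₁ = G.inv e₀) = decide (e₂ = G.inv e₀) := heq
        rw [decide_eq_decide] at heq
        rcases hall e₁ with rfl | rfl <;> rcases hall e₂ with rfl | rfl
        · rfl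
        · exact absurd (heq.mpr rfl) hne
        · exact absurd (heq.mp rfl) hne
        · rfl
      · intro b
        cases b
        · exact ⟨e₀, decide_eq_false hne⟩
        · exact ⟨G.inv e₀, decide_eq_true rfl⟩
    · constructor
      · intro h; exact (hHempty h).elim
      · intro x; exact x.elim
    · constructor
      · intro v; exact (hVempty v).elim
      · intro x; exact x.elim
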